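/- arXiv:2401.03206 — 5 statements merged into one kernel-verified Lean document; each statement's English description precedes it below -/
import Mathlib

section
/- Let σ > 0 and define the recursion e_{i+1} = (i²σ²(1 - a s_i))/(i²σ² + 1)·e_i + b_i/(i²σ² + 1), where a > 0, 0 ≤ a s_i < 1 for i ≥ h, (b_i) is a bounded real sequence, ∑ s_i = ∞. If b_i ≡ b is constant, then e_i → 0. -/
open Filter Finset

private lemma aux_rec_bound (c d E : ℕ → ℝ) (m : ℕ)
    (hc0 : ∀ i, m ≤ i → 0 ≤ c i) (hc1 : ∀ i, m ≤ i → c i ≤ 1)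
    (hd0 : ∀ i, 0 ≤ d i) (hE0 : ∀ i, 0 ≤ E i)
    (hE : ∀ i, m ≤ i → E (i + 1) ≤ c i * E i + d i) :
    ∀ n, m ≤ n →
      E n ≤ (∏ i ∈ Finset.Ico m n, c i) * E m + ∑ i ∈ Finset.Ico m n, d i := by
  intro n hn
  induction n, hn using Nat.le_induction with
  | base => simp
  | succ n hn ih =>
    have hcn0 := hc0 n hn
    have hcn1 := hc1 n hn
    have hP : 0 ≤ ∏ i ∈ Finset.Ico m n, c i :=
      Finset.prod_nonneg fun i hi => hc0 i (Finset.mem_Ico.mp hi).1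
    have hS : 0 ≤ ∑ i ∈ Finset.Ico m n, d i :=
      Finset.sum_nonneg fun i _ => hd0 i
    rw [Finset.prod_Ico_succ_top hn, Finset.sum_Ico_succ_top hn]
    have h1 : E (n + 1) ≤ c n * E n + d n := hE n hn
    have h2 : c n * E n ≤ c n * ((∏ i ∈ Finset.Ico m n, c i) * E m + ∑ i ∈ Finset.Ico m n, d i) :=
      mul_le_mul_of_nonneg_left ih hcn0
    nlinarith [hE0 m, mul_nonneg hP (hE0 m)]

theorem stmt_7 (σ a b : ℝ) (s e : ℕ → ℝ) (h : ℕ)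
    (hσ : 0 < σ) (ha : 0 < a)
    (hs : ∀ i, 0 ≤ s i)
    (hlt : ∀ i ≥ h, a * s i < 1)
    (hdiv : Tendsto (fun n => ∑ i ∈ Finset.range n, s i) atTop atTop)
    (hrec : ∀ i ≥ 1, e (i + 1) =
      ((i : ℝ) ^ 2 * σ ^ 2 * (1 - a * s i)) / ((i : ℝ) ^ 2 * σ ^ 2 + 1) * e i +
        b / ((i : ℝ) ^ 2 * σ ^ 2 + 1)) :
    Tendsto e atTop (nhds 0) := by
  set c : ℕ → ℝ := fun i => ((i : ℝ) ^ 2 * σ ^ 2 * (1 - a * s i)) / ((i : ℝ) ^ 2 * σ ^ 2 + 1)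
    with hc_def
  have hden : ∀ i : ℕ, (0 : ℝ) < (i : ℝ) ^ 2 * σ ^ 2 + 1 := fun i => by positivity
  have hsum : Summable (fun i : ℕ => |b| / ((i : ℝ) ^ 2 * σ ^ 2 + 1)) := by
    have hb1 : Summable (fun i : ℕ => 1 / ((i : ℝ) + 1) ^ 2) := by
      have h0 : Summable (fun i : ℕ => 1 / (i : ℝ) ^ 2) :=
        Real.summable_one_div_nat_pow.mpr one_lt_two
      exact ((summable_nat_add_iff 1).mpr h0).congr (fun i => by push_cast; ring)
    have hb2 : Summable (fun i : ℕ => (|b| / σ ^ 2) * (1 / ((i : ℝ) + 1) ^ 2)) :=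
      hb1.mul_left _
    rw [← summable_nat_add_iff 1]
    apply Summable.of_nonneg_of_le (fun i => by positivity) _ hb2
    intro i
    have h1 : (0:ℝ) < ((i:ℝ) + 1) ^ 2 * σ ^ 2 := by positivity
    have hc : ((i + 1 : ℕ) : ℝ) = (i : ℝ) + 1 := by push_cast; ring
    rw [hc, div_mul_eq_mul_div, mul_one_div, div_div]
    apply div_le_div_of_nonneg_left (abs_nonneg b) (by positivity)
    nlinarith
  set d : ℕ → ℝ := fun i => |b| / ((i : ℝ) ^ 2 * σ ^ 2 + 1) with hd_def
  have hd0 : ∀ i, 0 ≤ d i := fun i => by positivity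
  -- use metric characterization
  rw [Metric.tendsto_atTop]
  intro ε hε
  set m₁ : ℕ := max (max h 1) ⌈σ⁻¹⌉₊ with hm₁
  -- choose m ≥ m₁ with small tail
  have htail := tendsto_sum_nat_add d
  have hev : ∀ᶠ (i : ℕ) in atTop, (∑' k, d (k + i)) < ε / 2 ∧ m₁ ≤ i :=
    (htail.eventually (gt_mem_nhds (by positivity : (0:ℝ) < ε / 2))).and
      (eventually_ge_atTop m₁)
  obtain ⟨m, hm_tail, hm₁le⟩ := hev.exists
  have hm1 : 1 ≤ m := le_trans (le_trans (le_max_right h 1) (le_max_left _ _)) hm₁le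
  have hmh : h ≤ m := le_trans (le_trans (le_max_left h 1) (le_max_left _ _)) hm₁le
  have hmσ : ∀ i : ℕ, m ≤ i → (1 : ℝ) ≤ (i : ℝ) ^ 2 * σ ^ 2 := by
    intro i hi
    have h1 : σ⁻¹ ≤ (i : ℝ) := by
      calc σ⁻¹ ≤ (⌈σ⁻¹⌉₊ : ℝ) := Nat.le_ceil _
        _ ≤ (i : ℝ) := by
            exact_mod_cast le_trans (le_trans (le_max_right _ _) hm₁le) hi
    have h2 : (1 : ℝ) ≤ (i : ℝ) * σ := by
      rw [← inv_mul_cancel₀ (ne_of_gt hσ)]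
      exact mul_le_mul_of_nonneg_right h1 (le_of_lt hσ)
    nlinarith
  -- key pointwise facts
  have hc0 : ∀ i, m ≤ i → 0 ≤ c i := by
    intro i hi
    apply div_nonneg _ (le_of_lt (hden i))
    have := hlt i (le_trans hmh hi)
    nlinarith [sq_nonneg ((i:ℝ) * σ)]
  have hc1 : ∀ i, m ≤ i → c i ≤ 1 := by
    intro i hi
    rw [div_le_one (hden i)]
    have h1 : 0 ≤ a * s i := mul_nonneg (le_of_lt ha) (hs i)
    nlinarith [sq_nonneg ((i:ℝ) * σ)]
  have hcexp : ∀ i, m ≤ i → c i ≤ Real.exp (-(a / 2 * s i)) := by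
    intro i hi
    have h1 := hmσ i hi
    have h2 : c i ≤ 1 - a / 2 * s i := by
      rw [div_le_iff₀ (hden i)]
      have h3 := hs i
      nlinarith [mul_nonneg (mul_nonneg ha.le h3) (sub_nonneg.mpr h1)]
    calc c i ≤ 1 - a / 2 * s i := h2
      _ ≤ Real.exp (-(a / 2 * s i)) := by
          have := Real.add_one_le_exp (-(a / 2 * s i))
          linarith
  -- the recursion inequality on absolute values
  have hstep : ∀ i, m ≤ i → |e (i + 1)| ≤ c i * |e i| + d i := by
    intro i hi
    rw [hrec i (le_trans hm1 hi)]
    calc |c i * e i + b / ((i : ℝ) ^ 2 * σ ^ 2 + 1)|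
        ≤ |c i * e i| + |b / ((i : ℝ) ^ 2 * σ ^ 2 + 1)| := abs_add_le _ _
      _ = c i * |e i| + d i := by
          rw [abs_mul, abs_of_nonneg (hc0 i hi), abs_div,
            abs_of_pos (hden i)]
  have hkey := aux_rec_bound c d (fun i => |e i|) m hc0 hc1 hd0 (fun i => abs_nonneg _) hstep
  -- tail sums bounded by ε/2
  have htail_bound : ∀ n, (∑ i ∈ Finset.Ico m n, d i) ≤ ε / 2 := by
    intro n
    rcases le_or_gt m n with hmn | hmn
    · rw [Finset.sum_Ico_eq_sum_range]
      calc (∑ i ∈ Finset.range (n - m), d (m + i))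
          ≤ ∑' k, d (k + m) := by
            have hsum' : Summable (fun k => d (k + m)) := (summable_nat_add_iff m).mpr hsum
            have := Summable.sum_le_tsum (Finset.range (n - m)) (fun i _ => hd0 (i + m)) hsum'
            simpa [add_comm] using this
        _ ≤ ε / 2 := le_of_lt hm_tail
    · rw [Finset.Ico_eq_empty (by omega)]
      rw [Finset.sum_empty]
      positivity
  -- product term tends to zero
  have hprod_le : ∀ n, m ≤ n →
      (∏ i ∈ Finset.Ico m n, c i) ≤ Real.exp (-(a / 2 * ∑ i ∈ Finset.Ico m n, s i)) := by
    intro n hn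
    have : (∏ i ∈ Finset.Ico m n, c i) ≤ ∏ i ∈ Finset.Ico m n, Real.exp (-(a / 2 * s i)) := by
      apply Finset.prod_le_prod
      · exact fun i hi => hc0 i (Finset.mem_Ico.mp hi).1
      · exact fun i hi => hcexp i (Finset.mem_Ico.mp hi).1
    calc (∏ i ∈ Finset.Ico m n, c i) ≤ ∏ i ∈ Finset.Ico m n, Real.exp (-(a / 2 * s i)) := this
      _ = Real.exp (∑ i ∈ Finset.Ico m n, -(a / 2 * s i)) := (Real.exp_sum _ _).symm
      _ = Real.exp (-(a / 2 * ∑ i ∈ Finset.Ico m n, s i)) := by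
          congr 1
          rw [Finset.mul_sum, ← Finset.sum_neg_distrib]
  have hSdiv : Tendsto (fun n => ∑ i ∈ Finset.Ico m n, s i) atTop atTop := by
    have h1 : Tendsto (fun n => (∑ i ∈ Finset.range n, s i) + -(∑ i ∈ Finset.range m, s i))
        atTop atTop := tendsto_atTop_add_const_right atTop _ hdiv
    apply h1.congr'
    filter_upwards [eventually_ge_atTop m] with n hn
    rw [← sub_eq_add_neg, Finset.sum_Ico_eq_sub _ hn]
  have hexp0 : Tendsto (fun n => Real.exp (-(a / 2 * ∑ i ∈ Finset.Ico m n, s i)) * |e m|)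
      atTop (nhds 0) := by
    have h1 : Tendsto (fun n => -(a / 2 * ∑ i ∈ Finset.Ico m n, s i)) atTop atBot := by
      exact tendsto_neg_atBot_iff.mpr (Tendsto.const_mul_atTop (by positivity) hSdiv)
    have h2 := Real.tendsto_exp_atBot.comp h1
    have := h2.mul_const |e m|
    simpa using this
  have hfinal : ∀ᶠ n in atTop,
      Real.exp (-(a / 2 * ∑ i ∈ Finset.Ico m n, s i)) * |e m| < ε / 2 :=
    hexp0.eventually (gt_mem_nhds (by positivity : (0:ℝ) < ε / 2))
  obtain ⟨N, hN⟩ := (hfinal.and (eventually_ge_atTop m)).exists_forall_of_atTop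
  refine ⟨N, fun n hn => ?_⟩
  obtain ⟨hN1, hN2⟩ := hN n hn
  rw [Real.dist_eq, sub_zero]
  have hb := hkey n hN2
  have hP : (∏ i ∈ Finset.Ico m n, c i) * |e m|
      ≤ Real.exp (-(a / 2 * ∑ i ∈ Finset.Ico m n, s i)) * |e m| :=
    mul_le_mul_of_nonneg_right (hprod_le n hN2) (abs_nonneg _)
  calc |e n| ≤ (∏ i ∈ Finset.Ico m n, c i) * |e m| + ∑ i ∈ Finset.Ico m n, d i := hb
    _ < ε / 2 + ε / 2 := by
        have := htail_bound n
        linarith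
    _ = ε := by ring
end

section
/- Suppose π : ℝ → ℝ is a positive differentiable probability density with |π'(x)/π(x)| ≤ J for all x, and N_i(x) is the Gaussian density with mean μ and variance 1/i². If x* is a critical point maximizing π(x)·N_i(x), then |x* - μ| ≤ J/i². -/
theorem stmt_9 (J μ xstar : ℝ) (i : ℕ) (π : ℝ → ℝ)
    (hJ : 0 < J) (hi : 1 ≤ i)
    (hπpos : ∀ x, 0 < π x)
    (hπdiff : Differentiable ℝ π)
    (hlog : ∀ x, |deriv π x| ≤ J * π x)
    (hcrit : deriv (fun x => π x *
      ((i : ℝ) / Real.sqrt (2 * Real.pi) *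
        Real.exp (-(i : ℝ) ^ 2 * (x - μ) ^ 2 / 2))) xstar = 0) :
    |xstar - μ| ≤ J / (i : ℝ) ^ 2 := by
  set c : ℝ := (i : ℝ) / Real.sqrt (2 * Real.pi) with hc
  have hipos : (0:ℝ) < (i:ℝ) := by exact_mod_cast Nat.lt_of_lt_of_le Nat.zero_lt_one hi
  have hcpos : 0 < c := div_pos hipos (Real.sqrt_pos.mpr (by positivity))
  -- derivative of the inner function
  have hu : HasDerivAt (fun x : ℝ => -(i : ℝ) ^ 2 * (x - μ) ^ 2 / 2)
      (-(i : ℝ) ^ 2 * (xstar - μ)) xstar := by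
    have h1 : HasDerivAt (fun x : ℝ => x - μ) 1 xstar :=
      (hasDerivAt_id xstar).sub_const μ
    have h2 : HasDerivAt (fun x : ℝ => (x - μ) ^ 2) (2 * (xstar - μ)) xstar := by
      simpa using h1.fun_pow 2
    have h3 := (h2.const_mul (-(i : ℝ) ^ 2)).div_const 2
    exact h3.congr_deriv (by ring)
  have hg : HasDerivAt (fun x : ℝ => c * Real.exp (-(i : ℝ) ^ 2 * (x - μ) ^ 2 / 2))
      (c * (Real.exp (-(i : ℝ) ^ 2 * (xstar - μ) ^ 2 / 2) * (-(i : ℝ) ^ 2 * (xstar - μ)))) xstar := by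
    exact (hu.exp).const_mul c
  have hf := (hπdiff.differentiableAt.hasDerivAt).fun_mul hg
  have hderiv := hf.deriv
  rw [hcrit] at hderiv
  set E : ℝ := Real.exp (-(i : ℝ) ^ 2 * (xstar - μ) ^ 2 / 2) with hE
  have hEpos : 0 < E := Real.exp_pos _
  -- 0 = deriv π xstar * (c*E) + π xstar * (c*(E*(-i²(xstar-μ))))
  have key : deriv π xstar = π xstar * ((i : ℝ) ^ 2 * (xstar - μ)) := by
    have hne : c * E ≠ 0 := by positivity
    have : (deriv π xstar - π xstar * ((i : ℝ) ^ 2 * (xstar - μ))) * (c * E) = 0 := by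
      linear_combination -hderiv
    have := (mul_eq_zero.mp this).resolve_right hne
    linarith
  have hπp := hπpos xstar
  have habs : π xstar * ((i : ℝ) ^ 2 * |xstar - μ|) ≤ J * π xstar := by
    have := hlog xstar
    rw [key] at this
    calc π xstar * ((i : ℝ) ^ 2 * |xstar - μ|)
        = |π xstar * ((i : ℝ) ^ 2 * (xstar - μ))| := by
          rw [abs_mul, abs_mul, abs_of_pos hπp, abs_of_pos (by positivity : (0:ℝ) < (i:ℝ)^2)]
      _ ≤ J * π xstar := this
  have h2 : (i : ℝ) ^ 2 * |xstar - μ| ≤ J := by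
    have := (mul_le_mul_iff_right₀ hπp).mp (by linarith [habs] : π xstar * ((i : ℝ) ^ 2 * |xstar - μ|) ≤ π xstar * J)
    linarith
  rw [le_div_iff₀ (by positivity : (0:ℝ) < (i:ℝ)^2)]
  linarith
end

section
/- Let the weighted-sum-of-Gaussians prior be P(x) = ∑_{r=1}^L w_r N(x | μ_r, σ²) with w_r > 0, ∑ w_r = 1, σ > 0, and let G(x) = N(x | m, 1/i²). Then any maximizer x* of P·G lies between min_r z_r and max_r z_r, where z_r = (i²σ² m + μ_r)/(i²σ² + 1) is the maximizer of N(·|μ_r,σ²)·G. -/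
/-- Gaussian density with mean `α` and standard deviation `β`. -/
noncomputable def gaussianDensity (α β x : ℝ) : ℝ :=
  (1 / (β * Real.sqrt (2 * Real.pi))) * Real.exp (-(x - α) ^ 2 / (2 * β ^ 2))

lemma gauss_key (σ : ℝ) (hσ : 0 < σ) (i : ℝ) (hi : 0 < i) (μ m x y : ℝ)
    (h : (x - (i ^ 2 * σ ^ 2 * m + μ) / (i ^ 2 * σ ^ 2 + 1)) ^ 2 <
         (y - (i ^ 2 * σ ^ 2 * m + μ) / (i ^ 2 * σ ^ 2 + 1)) ^ 2) :
    gaussianDensity μ σ y * gaussianDensity m (1 / i) y <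
    gaussianDensity μ σ x * gaussianDensity m (1 / i) x := by
  set z := (i ^ 2 * σ ^ 2 * m + μ) / (i ^ 2 * σ ^ 2 + 1) with hz
  have hs : 0 < Real.sqrt (2 * Real.pi) := Real.sqrt_pos.mpr (by positivity)
  have prod_eq : ∀ t : ℝ, gaussianDensity μ σ t * gaussianDensity m (1 / i) t
      = (1 / (σ * Real.sqrt (2 * Real.pi)) * (1 / ((1 / i) * Real.sqrt (2 * Real.pi)))) *
        Real.exp (-(t - μ) ^ 2 / (2 * σ ^ 2) + -(t - m) ^ 2 / (2 * (1 / i) ^ 2)) := by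
    intro t
    unfold gaussianDensity
    rw [Real.exp_add]
    ring
  rw [prod_eq x, prod_eq y]
  have hC : 0 < 1 / (σ * Real.sqrt (2 * Real.pi)) * (1 / ((1 / i) * Real.sqrt (2 * Real.pi))) := by
    positivity
  apply mul_lt_mul_of_pos_left _ hC
  apply Real.exp_lt_exp.mpr
  have hd : (0:ℝ) < i ^ 2 * σ ^ 2 + 1 := by positivity
  have key : ∀ t : ℝ, -(t - μ) ^ 2 / (2 * σ ^ 2) + -(t - m) ^ 2 / (2 * (1 / i) ^ 2)
      = -((1 / σ ^ 2 + i ^ 2) / 2) * (t - z) ^ 2 +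
        (-(μ - m) ^ 2 * i ^ 2 / (2 * (i ^ 2 * σ ^ 2 + 1))) := by
    intro t
    rw [hz]
    field_simp
    ring
  rw [key x, key y]
  have hA : (0:ℝ) < 1 / σ ^ 2 + i ^ 2 := by positivity
  nlinarith [h]

theorem stmt_12 (L : ℕ) (w μ : Fin (L + 1) → ℝ) (σ m : ℝ) (i : ℕ) (xstar : ℝ)
    (hσ : 0 < σ) (hi : 1 ≤ i)
    (hw : ∀ r, 0 < w r) (hsum : ∑ r, w r = 1)
    (hmax : ∀ x : ℝ,
      (∑ r, w r * gaussianDensity (μ r) σ x) * gaussianDensity m (1 / (i : ℝ)) x ≤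
      (∑ r, w r * gaussianDensity (μ r) σ xstar) * gaussianDensity m (1 / (i : ℝ)) xstar) :
    (Finset.univ.inf' Finset.univ_nonempty
        (fun r => ((i : ℝ) ^ 2 * σ ^ 2 * m + μ r) / ((i : ℝ) ^ 2 * σ ^ 2 + 1))) ≤ xstar ∧
    xstar ≤ (Finset.univ.sup' Finset.univ_nonempty
        (fun r => ((i : ℝ) ^ 2 * σ ^ 2 * m + μ r) / ((i : ℝ) ^ 2 * σ ^ 2 + 1))) := by
  have hi' : (0:ℝ) < (i:ℝ) := by exact_mod_cast Nat.lt_of_lt_of_le Nat.zero_lt_one hi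
  set z : Fin (L + 1) → ℝ :=
    fun r => ((i : ℝ) ^ 2 * σ ^ 2 * m + μ r) / ((i : ℝ) ^ 2 * σ ^ 2 + 1) with hzdef
  constructor
  · by_contra hc
    push_neg at hc
    set a := Finset.univ.inf' Finset.univ_nonempty z with ha
    have hstrict : (∑ r, w r * gaussianDensity (μ r) σ xstar) * gaussianDensity m (1 / (i : ℝ)) xstar
        < (∑ r, w r * gaussianDensity (μ r) σ a) * gaussianDensity m (1 / (i : ℝ)) a := by
      rw [Finset.sum_mul, Finset.sum_mul]
      apply Finset.sum_lt_sum_of_nonempty Finset.univ_nonempty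
      intro r _
      rw [mul_assoc, mul_assoc]
      apply mul_lt_mul_of_pos_left _ (hw r)
      apply gauss_key σ hσ (i:ℝ) hi' (μ r) m a xstar
      have h1 : a ≤ z r := Finset.inf'_le _ (Finset.mem_univ r)
      nlinarith [hc, h1]
    exact absurd (hmax a) (not_le.mpr hstrict)
  · by_contra hc
    push_neg at hc
    set b := Finset.univ.sup' Finset.univ_nonempty z with hb
    have hstrict : (∑ r, w r * gaussianDensity (μ r) σ xstar) * gaussianDensity m (1 / (i : ℝ)) xstar
        < (∑ r, w r * gaussianDensity (μ r) σ b) * gaussianDensity m (1 / (i : ℝ)) b := by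
      rw [Finset.sum_mul, Finset.sum_mul]
      apply Finset.sum_lt_sum_of_nonempty Finset.univ_nonempty
      intro r _
      rw [mul_assoc, mul_assoc]
      apply mul_lt_mul_of_pos_left _ (hw r)
      apply gauss_key σ hσ (i:ℝ) hi' (μ r) m b xstar
      have h1 : z r ≤ b := Finset.le_sup' _ (Finset.mem_univ r)
      nlinarith [hc, h1]
    exact absurd (hmax b) (not_le.mpr hstrict)
end

section
/- Suppose e_{n+1} = c_n e_n + r_n where 0 ≤ c_n ≤ 1, ∏_{k=h}^∞ c_k = 0, and ∑_{n=h}^∞ |r_n| < ∞, and additionally for every m, ∏_{k=m}^∞ c_k = 0. Then e_n → 0. -/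
open Filter Finset

set_option maxHeartbeats 1000000 in
theorem stmt_17 (e c r : ℕ → ℝ) (h : ℕ)
    (hc : ∀ n ≥ h, 0 ≤ c n ∧ c n ≤ 1)
    (hprod : ∀ m ≥ h, Tendsto (fun n => ∏ k ∈ Finset.Icc m n, c k) atTop (nhds 0))
    (hr : Summable (fun n => |r n|))
    (hrec : ∀ n ≥ h, e (n + 1) = c n * e n + r n) :
    Tendsto e atTop (nhds 0) := by
  -- key inductive bound
  have key : ∀ m, h ≤ m → ∀ n, m ≤ n →
      |e (n + 1)| ≤ (∏ k ∈ Finset.Icc m n, c k) * |e m| + ∑ k ∈ Finset.Icc m n, |r k| := by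
    intro m hm n hn
    induction n, hn using Nat.le_induction with
    | base =>
      rw [Finset.Icc_self, Finset.prod_singleton, Finset.sum_singleton,
        hrec m hm]
      calc |c m * e m + r m| ≤ |c m * e m| + |r m| := abs_add_le _ _
        _ = c m * |e m| + |r m| := by
            rw [abs_mul, abs_of_nonneg (hc m hm).1]
    | succ n hn ih =>
      have hn1 : h ≤ n + 1 := le_trans hm (le_trans hn (Nat.le_succ n))
      have hc1 := hc (n + 1) hn1
      have hP : 0 ≤ ∏ k ∈ Finset.Icc m n, c k :=
        Finset.prod_nonneg fun k hk => (hc k (le_trans hm (Finset.mem_Icc.mp hk).1)).1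
      have hS : 0 ≤ ∑ k ∈ Finset.Icc m n, |r k| :=
        Finset.sum_nonneg fun k _ => abs_nonneg _
      rw [hrec (n + 1) hn1]
      calc |c (n+1) * e (n+1) + r (n+1)|
          ≤ |c (n+1) * e (n+1)| + |r (n+1)| := abs_add_le _ _
        _ = c (n+1) * |e (n+1)| + |r (n+1)| := by rw [abs_mul, abs_of_nonneg hc1.1]
        _ ≤ c (n+1) * ((∏ k ∈ Finset.Icc m n, c k) * |e m| + ∑ k ∈ Finset.Icc m n, |r k|) + |r (n+1)| := by
            gcongr
            exact hc1.1
        _ ≤ (∏ k ∈ Finset.Icc m (n+1), c k) * |e m| + ∑ k ∈ Finset.Icc m (n+1), |r k| := by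
            rw [Finset.prod_Icc_succ_top (le_trans hn (Nat.le_succ n)),
              Finset.sum_Icc_succ_top (le_trans hn (Nat.le_succ n))]
            have : c (n+1) * ((∏ k ∈ Finset.Icc m n, c k) * |e m| + ∑ k ∈ Finset.Icc m n, |r k|)
                = (∏ k ∈ Finset.Icc m n, c k) * c (n+1) * |e m| + c (n+1) * ∑ k ∈ Finset.Icc m n, |r k| := by ring
            rw [this]
            have h2 : c (n+1) * ∑ k ∈ Finset.Icc m n, |r k| ≤ ∑ k ∈ Finset.Icc m n, |r k| := by
              nlinarith [hc1.2]
            linarith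
  rw [Metric.tendsto_atTop]
  intro ε hε
  -- choose m with small tail sum
  have htail : Tendsto (fun m => ∑' k, |r (k + m)|) atTop (nhds 0) :=
    tendsto_sum_nat_add fun n => |r n|
  have hε2 : 0 < ε / 2 := by linarith
  obtain ⟨m₀, hm₀⟩ := (Metric.tendsto_atTop.mp htail (ε/2) hε2)
  set m := max m₀ h with hmdef
  have hmh : h ≤ m := le_max_right _ _
  have htm : ∑' k, |r (k + m)| < ε / 2 := by
    have := hm₀ m (le_max_left _ _)
    rw [Real.dist_eq, sub_zero] at this
    exact lt_of_le_of_lt (le_abs_self _) this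
  have hsummtail : Summable fun k => |r (k + m)| := (summable_nat_add_iff m).mpr hr
  -- choose N with small product
  have hprodm := hprod m hmh
  have hδ : 0 < ε / 2 / (|e m| + 1) := by positivity
  obtain ⟨N, hN⟩ := Metric.tendsto_atTop.mp hprodm _ hδ
  refine ⟨max N m + 1, fun n hn => ?_⟩
  have hex : ∃ n', n = n' + 1 := ⟨n - 1, by omega⟩
  obtain ⟨n', rfl⟩ := hex
  have hn'N : N ≤ n' := by
    have := le_trans (le_max_left N m) (Nat.lt_succ_iff.mp hn)
    omega
  have hn'm : m ≤ n' := by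
    have := le_trans (le_max_right N m) (Nat.lt_succ_iff.mp hn)
    omega
  have hbound := key m hmh n' hn'm
  have hP : 0 ≤ ∏ k ∈ Finset.Icc m n', c k :=
    Finset.prod_nonneg fun k hk => (hc k (le_trans hmh (Finset.mem_Icc.mp hk).1)).1
  -- product part
  have hprodsmall : (∏ k ∈ Finset.Icc m n', c k) * |e m| < ε / 2 := by
    have := hN n' hn'N
    rw [Real.dist_eq, sub_zero, abs_of_nonneg hP] at this
    have h1 : (∏ k ∈ Finset.Icc m n', c k) * |e m| ≤ (∏ k ∈ Finset.Icc m n', c k) * (|e m| + 1) := by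
      have := abs_nonneg (e m); nlinarith
    have h2 : (∏ k ∈ Finset.Icc m n', c k) * (|e m| + 1) < ε / 2 :=
      (lt_div_iff₀ (by positivity : (0:ℝ) < |e m| + 1)).mp this
    linarith
  -- sum part
  have hsumsmall : ∑ k ∈ Finset.Icc m n', |r k| < ε / 2 := by
    have heq : ∑ k ∈ Finset.Icc m n', |r k| = ∑ k ∈ Finset.range (n' + 1 - m), |r (k + m)| := by
      rw [← Finset.Ico_add_one_right_eq_Icc, Finset.sum_Ico_eq_sum_range]
      exact Finset.sum_congr rfl fun k _ => by rw [add_comm]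
    rw [heq]
    calc ∑ k ∈ Finset.range (n' + 1 - m), |r (k + m)|
        ≤ ∑' k, |r (k + m)| := Summable.sum_le_tsum _ (fun k _ => abs_nonneg _) hsummtail
      _ < ε / 2 := htm
  rw [Real.dist_eq, sub_zero]
  calc |e (n' + 1)| ≤ (∏ k ∈ Finset.Icc m n', c k) * |e m| + ∑ k ∈ Finset.Icc m n', |r k| := hbound
    _ < ε / 2 + ε / 2 := by linarith
    _ = ε := by ring
end

section
/- For the prior-information RM iterate with log-Lipschitz prior (|π'/π| ≤ J) and step sizes s_i = 1/i, if x_{i+1} is a critical point of π(x)·N(x | x_i - s_i(f(x_i) - y_t + ε_i), 1/i²), then there exists g_i ∈ [f(x_i) - J/i, f(x_i) + J/i] such that x_{i+1} = x_i - s_i(g_i - y_t + ε_i); i.e., the prior-information step coincides with a standard RM step applied to a function perturbed by at most J/i. -/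
theorem stmt_19 (J yt εi xi xnext : ℝ) (i : ℕ) (π f : ℝ → ℝ)
    (hJ : 0 < J) (hi : 1 ≤ i)
    (hπpos : ∀ x, 0 < π x)
    (hπdiff : Differentiable ℝ π)
    (hlog : ∀ x, |deriv π x| ≤ J * π x)
    (hcrit : deriv (fun x => π x *
      gaussianDensity (xi - (1 / (i : ℝ)) * (f xi - yt + εi)) (1 / (i : ℝ)) x) xnext = 0) :
    ∃ g : ℝ, |g - f xi| ≤ J / (i : ℝ) ∧
      xnext = xi - (1 / (i : ℝ)) * (g - yt + εi) := by
  have hipos : (0:ℝ) < (i:ℝ) := by exact_mod_cast Nat.lt_of_lt_of_le Nat.zero_lt_one hi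
  set β : ℝ := 1 / (i : ℝ) with hβdef
  have hβ : 0 < β := by positivity
  set μ : ℝ := xi - β * (f xi - yt + εi) with hμdef
  set C : ℝ := 1 / (β * Real.sqrt (2 * Real.pi)) with hCdef
  set E : ℝ := Real.exp (-(xnext - μ) ^ 2 / (2 * β ^ 2)) with hEdef
  have hC : 0 < C := by
    have : 0 < Real.sqrt (2 * Real.pi) := Real.sqrt_pos.mpr (by positivity)
    positivity
  have hE : 0 < E := Real.exp_pos _
  -- derivative of the inner quadratic
  have h1 : HasDerivAt (fun x : ℝ => -(x - μ) ^ 2 / (2 * β ^ 2))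
      (-(xnext - μ) / β ^ 2) xnext := by
    have hs : HasDerivAt (fun x : ℝ => x - μ) 1 xnext := (hasDerivAt_id xnext).sub_const μ
    have hp : HasDerivAt (fun x : ℝ => (x - μ) ^ 2) (2 * (xnext - μ)) xnext := by
      simpa using hs.fun_pow 2
    have := hp.const_mul (-(1 / (2 * β ^ 2)))
    convert this using 1
    · rfl
    · rfl
    · funext x
      first
      | (field_simp; ring)
      | field_simp
    · first
      | (field_simp; ring)
      | field_simp
  have hG : HasDerivAt (fun x => gaussianDensity μ β x)
      (C * (E * (-(xnext - μ) / β ^ 2))) xnext := by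
    have := (h1.exp).const_mul C
    simpa [gaussianDensity, hCdef, hEdef, mul_comm] using this
  have hprod : HasDerivAt (fun x => π x * gaussianDensity μ β x)
      (deriv π xnext * gaussianDensity μ β xnext +
        π xnext * (C * (E * (-(xnext - μ) / β ^ 2)))) xnext :=
    ((hπdiff xnext).hasDerivAt).mul hG
  have heq : deriv π xnext * gaussianDensity μ β xnext +
      π xnext * (C * (E * (-(xnext - μ) / β ^ 2))) = 0 := by
    rw [← hprod.deriv]; exact hcrit
  have hGval : gaussianDensity μ β xnext = C * E := rfl
  rw [hGval] at heq
  -- solve: deriv π xnext = π xnext * (xnext - μ) / β ^ 2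
  have hkey : deriv π xnext = π xnext * (xnext - μ) / β ^ 2 := by
    have hCE : C * E ≠ 0 := by positivity
    have : C * E * (deriv π xnext - π xnext * (xnext - μ) / β ^ 2) = 0 := by
      have hβ2 : (β:ℝ) ^ 2 ≠ 0 := by positivity
      field_simp at heq ⊢
      linarith [heq]
    rcases mul_eq_zero.mp this with h | h
    · exact absurd h hCE
    · linarith
  have hbound : |xnext - μ| ≤ J * β ^ 2 := by
    have h := hlog xnext
    rw [hkey] at h
    have hπx := hπpos xnext
    have hβ2 : (0:ℝ) < β ^ 2 := by positivity
    rw [abs_div, abs_mul, abs_of_pos hπx, abs_of_pos hβ2, div_le_iff₀ hβ2] at h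
    nlinarith [hπx]
  refine ⟨(xi - xnext) * (i : ℝ) + yt - εi, ?_, ?_⟩
  · have hf : f xi = (i : ℝ) * (xi - μ) + yt - εi := by
      rw [hμdef, hβdef]; field_simp; ring
    have : (xi - xnext) * (i : ℝ) + yt - εi - f xi = (i : ℝ) * (μ - xnext) := by
      rw [hf]; ring
    rw [this, abs_mul, abs_of_pos hipos]
    have : |μ - xnext| ≤ J * β ^ 2 := by rw [abs_sub_comm]; exact hbound
    calc (i:ℝ) * |μ - xnext| ≤ (i:ℝ) * (J * β ^ 2) := by nlinarith
      _ = J / (i:ℝ) := by rw [hβdef]; field_simp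
  · rw [hβdef] at *
    field_simp
    ring
end
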